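/- For the planar system x' = (d+σ)(N + σ/(αβ)) - (d+σ)x - αβxy, y' = αβxy - (d+r_s+σ)y with unique positive equilibrium (x₀, y₀), the Lyapunov function V(x,y) = (1/2)(x-x₀)² + x₀(y - y₀ - y₀ ln(y/y₀)) satisfies V ≥ 0 with equality iff (x,y) = (x₀,y₀), and its derivative along trajectories equals -(x-x₀)²(αβy + d + σ) ≤ 0. -/

import Mathlib

lemma log_term_nonneg (y0 y : ℝ) (hy0 : 0 < y0) (hy : 0 < y) :
    0 ≤ y - y0 - y0 * Real.log (y / y0) := by
  have h := Real.log_le_sub_one_of_pos (div_pos hy hy0)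
  have := mul_le_mul_of_nonneg_left h hy0.le
  have hne : y0 ≠ 0 := ne_of_gt hy0
  nlinarith [mul_div_cancel₀ y hne]

lemma log_term_pos (y0 y : ℝ) (hy0 : 0 < y0) (hy : 0 < y) (hne : y ≠ y0) :
    0 < y - y0 - y0 * Real.log (y / y0) := by
  have hne1 : y / y0 ≠ 1 := by
    intro h
    exact hne (by field_simp at h; linarith)
  have h := Real.log_lt_sub_one_of_pos (div_pos hy hy0) hne1
  have := mul_lt_mul_of_pos_left h hy0
  have hne0 : y0 ≠ 0 := ne_of_gt hy0
  nlinarith [mul_div_cancel₀ y hne0]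

theorem planar_lyapunov
    (d σ β rs α N x0 y0 : ℝ)
    (hd : 0 < d) (hσ : 0 < σ) (hβ : 0 < β) (hrs : 0 < rs) (hα : 0 < α)
    (hN : 0 < N) (hx0 : 0 < x0) (hy0 : 0 < y0)
    (heq1 : α * β * x0 = d + rs + σ)
    (heq2 : (d + σ) * (N + σ / (α * β)) = (d + σ) * x0 + α * β * x0 * y0) :
    let V : ℝ → ℝ → ℝ := fun x y =>
      (1 / 2) * (x - x0) ^ 2 + x0 * (y - y0 - y0 * Real.log (y / y0))
    (∀ x y : ℝ, 0 < x → 0 < y → 0 ≤ V x y) ∧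
    (∀ x y : ℝ, 0 < x → 0 < y → (V x y = 0 ↔ x = x0 ∧ y = y0)) ∧
    (∀ (x y : ℝ → ℝ) (t : ℝ), 0 < x t → 0 < y t →
      HasDerivAt x ((d + σ) * (N + σ / (α * β)) - (d + σ) * x t
        - α * β * x t * y t) t →
      HasDerivAt y (α * β * x t * y t - (d + rs + σ) * y t) t →
      HasDerivAt (fun u => V (x u) (y u))
        (-(x t - x0) ^ 2 * (α * β * y t + d + σ)) t ∧
      -(x t - x0) ^ 2 * (α * β * y t + d + σ) ≤ 0) := by
  intro V
  refine ⟨?_, ?_, ?_⟩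
  · intro x y hx hy
    have h1 := log_term_nonneg y0 y hy0 hy
    have h2 : 0 ≤ (x - x0) ^ 2 := sq_nonneg _
    have := mul_nonneg hx0.le h1
    simp only [V]
    nlinarith
  · intro x y hx hy
    constructor
    · intro hV
      have h1 := log_term_nonneg y0 y hy0 hy
      have h2 : 0 ≤ (x - x0) ^ 2 := sq_nonneg _
      simp only [V] at hV
      constructor
      · by_contra hxx
        have hxx' : x - x0 ≠ 0 := sub_ne_zero_of_ne hxx
        have hsq : 0 < (x - x0) ^ 2 := by positivity
        nlinarith [mul_nonneg hx0.le h1]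
      · by_contra hyy
        have h3 := log_term_pos y0 y hy0 hy hyy
        nlinarith [mul_pos hx0 h3]
    · rintro ⟨rfl, rfl⟩
      simp [V, div_self (ne_of_gt hy0)]
  · intro x y t hx hy hdx hdy
    constructor
    · have hyne : y t ≠ 0 := ne_of_gt hy
      have hy0ne : y0 ≠ 0 := ne_of_gt hy0
      set X' := (d + σ) * (N + σ / (α * β)) - (d + σ) * x t - α * β * x t * y t with hX'
      set Y' := α * β * x t * y t - (d + rs + σ) * y t with hY'
      have h1 : HasDerivAt (fun u => (1 / 2 : ℝ) * (x u - x0) ^ 2)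
          ((1 / 2) * (2 * (x t - x0) ^ 1 * X')) t :=
        (((hdx.sub_const x0).pow 2)).const_mul (1 / 2)
      have hdiv : y t / y0 ≠ 0 := div_ne_zero hyne hy0ne
      have h2 : HasDerivAt (fun u => Real.log (y u / y0)) ((Y' / y0) / (y t / y0)) t :=
        (hdy.div_const y0).log hdiv
      have h3 : HasDerivAt (fun u => x0 * (y u - y0 - y0 * Real.log (y u / y0)))
          (x0 * (Y' - y0 * ((Y' / y0) / (y t / y0)))) t :=
        (((hdy.sub_const y0).sub (h2.const_mul y0))).const_mul x0
      have h4 := h1.add h3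
      convert h4 using 1
      case e'_4 => rfl
      case e'_5 => rfl
      case e'_8 => rfl
      have hab : α * β ≠ 0 := by positivity
      have heq2' : (d + σ) * (N * (α * β) + σ) = ((d + σ) * x0 + α * β * x0 * y0) * (α * β) := by
        field_simp at heq2
        linarith
      rw [hX', hY', ← heq1]
      field_simp
      linear_combination (-(x t - x0)) * heq2'
    · have h : 0 ≤ (x t - x0) ^ 2 * (α * β * y t + d + σ) := by positivity
      linarith
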